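/- For every z ∈ ℂ, setting a = (1 + |z|²)^(−1/2), the following identity of 2×2 complex matrices holds: [[i z, i], [i, 0]] = [[i z a, i a], [i a, −i (conj z) a]] * [[1, conj z], [0, 1]] * [[a⁻¹, 0], [0, a]]. -/

import Mathlib

open Matrix Complex

/-- The explicit Iwasawa factorization in `SL(2, ℂ)` of the matrix
`n_z σ = [[i z, i], [i, 0]]` as a product of a special unitary matrix, a unipotent
upper-triangular matrix, and a positive diagonal matrix, where
`a = (1 + |z|²)^(-1/2)`. -/
theorem iwasawa_factorization_nz_sigma (z : ℂ) :
    let a : ℝ := (1 + ‖z‖ ^ 2) ^ (-(1 / 2 : ℝ))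
    (!![Complex.I * z, Complex.I; Complex.I, 0] : Matrix (Fin 2) (Fin 2) ℂ) =
      !![Complex.I * z * (a : ℂ), Complex.I * (a : ℂ);
         Complex.I * (a : ℂ), -Complex.I * (starRingEnd ℂ z) * (a : ℂ)] *
      !![1, (starRingEnd ℂ z); 0, 1] *
      !![((a : ℂ))⁻¹, 0; 0, (a : ℂ)] := by
  intro a
  have hpos : (0 : ℝ) < 1 + ‖z‖ ^ 2 := by positivity
  have hapos : (0 : ℝ) < a := Real.rpow_pos_of_pos hpos _
  have hane : (a : ℂ) ≠ 0 := by exact_mod_cast hapos.ne'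
  have hsq : (a : ℝ) ^ 2 * (1 + ‖z‖ ^ 2) = 1 := by
    rw [← Real.rpow_natCast _ 2, ← Real.rpow_mul hpos.le]
    norm_num
    rw [Real.rpow_neg_one]
    exact inv_mul_cancel₀ hpos.ne'
  have hsqC : (a : ℂ) ^ 2 * (1 + ‖z‖ ^ 2) = 1 := by
    exact_mod_cast congrArg (Complex.ofReal) hsq
  have hzz : (starRingEnd ℂ z) * z = (‖z‖ ^ 2 : ℝ) := by
    rw [mul_comm, Complex.mul_conj]
    simp [Complex.sq_norm]
  ext i j
  fin_cases i <;> fin_cases j <;>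
    simp [Matrix.mul_apply, Fin.sum_univ_succ, hane]
  · push_cast at hzz ⊢
    linear_combination -Complex.I * hsqC - Complex.I * (a : ℂ) ^ 2 * hzz
  · ring
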